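/- Completeness of C^n_Lip: for all real Banach spaces V₁, V₂ and every integer n ≥ 0, the normed space (C^n_Lip(V₁,V₂), ‖·‖_{C^n_Lip(V₁,V₂)}) is complete; i.e., for every sequence (φ_m)_{m∈ℕ} in C^n_Lip(V₁,V₂) with lim_{m,l→∞} ‖φ_m − φ_l‖_{C^n_Lip(V₁,V₂)} = 0 there exists φ ∈ C^n_Lip(V₁,V₂) with lim_{m→∞} ‖φ_m − φ‖_{C^n_Lip(V₁,V₂)} = 0. -/

import Mathlib

open Filter
open scoped ENNReal NNReal Topology

/-- The `C^n_Lip` norm of the paper: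
`‖φ‖_{C^n_Lip} = ‖φ(0)‖ + Σ_{i=1}^n sup_v ‖φ^{(i)}(v)‖ + sup_{v≠w} ‖φ^{(n)}(v)−φ^{(n)}(w)‖/‖v−w‖`,
as an element of `[0,∞]`. -/
noncomputable def CnLipNorm {V₁ V₂ : Type*} [NormedAddCommGroup V₁] [NormedSpace ℝ V₁]
    [NormedAddCommGroup V₂] [NormedSpace ℝ V₂] (n : ℕ) (φ : V₁ → V₂) : ℝ≥0∞ :=
  (‖φ 0‖₊ : ℝ≥0∞)
    + ∑ i ∈ Finset.Icc 1 n, ⨆ v : V₁, (‖iteratedFDeriv ℝ i φ v‖₊ : ℝ≥0∞)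
    + ⨆ (v : V₁) (w : V₁) (_ : v ≠ w),
        (‖iteratedFDeriv ℝ n φ v - iteratedFDeriv ℝ n φ w‖₊ : ℝ≥0∞) / (‖v - w‖₊ : ℝ≥0∞)

section Aux

theorem ennnorm_sub_le' {W : Type*} [NormedAddCommGroup W] (y z : W) :
    (‖y - z‖₊ : ℝ≥0∞) ≤ (‖y‖₊ : ℝ≥0∞) + (‖z‖₊ : ℝ≥0∞) := by
  rw [← ENNReal.coe_add]
  exact_mod_cast nnnorm_sub_le y z

theorem exists_nnreal_pos_mul_le (c : ℝ≥0∞) (hc : c ≠ ⊤) {ε : ℝ≥0∞} (hε : 0 < ε) :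
    ∃ δ : ℝ≥0, 0 < δ ∧ (δ : ℝ≥0∞) * c ≤ ε := by
  rcases eq_or_ne c 0 with rfl | hc0
  · exact ⟨1, one_pos, by simp⟩
  · refine ⟨(min 1 (ε / c)).toNNReal, ?_, ?_⟩
    · rw [ENNReal.toNNReal_pos_iff]
      constructor
      · simp only [lt_min_iff]
        exact ⟨one_pos, ENNReal.div_pos hε.ne' hc⟩
      · exact lt_of_le_of_lt (min_le_left _ _) ENNReal.one_lt_top
    · rw [ENNReal.coe_toNNReal (by
        exact ne_top_of_le_ne_top ENNReal.one_ne_top (min_le_left _ _))]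
      calc min 1 (ε / c) * c ≤ ε / c * c := by
            exact mul_le_mul_left (min_le_right _ _) c
        _ = ε := ENNReal.div_mul_cancel hc0 hc

theorem tendsto_ennnorm_sub_iff {α W : Type*} [NormedAddCommGroup W] {l : Filter α}
    {f : α → W} {a : W} :
    Tendsto (fun x => (‖f x - a‖₊ : ℝ≥0∞)) l (𝓝 0) ↔ Tendsto f l (𝓝 a) := by
  refine Iff.trans ?_ tendsto_sub_nhds_zero_iff
  rw [tendsto_zero_iff_norm_tendsto_zero,
    show (0:ℝ≥0∞) = ((0:ℝ≥0):ℝ≥0∞) from rfl, ENNReal.tendsto_coe, ← NNReal.tendsto_coe]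
  simp [coe_nnnorm]

theorem cauchySeq_of_tendsto_ennnorm {W : Type*} [NormedAddCommGroup W] {f : ℕ → W}
    (h : Tendsto (fun p : ℕ × ℕ => (‖f p.1 - f p.2‖₊ : ℝ≥0∞)) atTop (𝓝 0)) : CauchySeq f := by
  rw [cauchySeq_iff_tendsto_dist_atTop_0]
  have h2 := (ENNReal.tendsto_toReal (a := 0) (by simp)).comp h
  simpa [Function.comp_def, dist_eq_norm] using h2

variable {V₁ V₂ : Type*} [NormedAddCommGroup V₁] [NormedSpace ℝ V₁]
    [NormedAddCommGroup V₂] [NormedSpace ℝ V₂]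

theorem myIteratedFDeriv_sub_apply {i : ℕ} {f g : V₁ → V₂} (hf : ContDiff ℝ i f)
    (hg : ContDiff ℝ i g) (v : V₁) :
    iteratedFDeriv ℝ i (f - g) v = iteratedFDeriv ℝ i f v - iteratedFDeriv ℝ i g v := by
  have h : (f - g) = f + (fun x => -g x) := by ext x; simp [sub_eq_add_neg]
  have hg' : ContDiff ℝ i (fun x => -g x) := hg.neg
  rw [h, iteratedFDeriv_add_apply hf.contDiffAt hg'.contDiffAt]
  have : (fun x => -g x) = -g := rfl
  rw [this, iteratedFDeriv_neg_apply, sub_eq_add_neg]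

theorem cnLipNorm_zero_eq (φ : V₁ → V₂) : CnLipNorm 0 φ = (‖φ 0‖₊ : ℝ≥0∞) := by
  unfold CnLipNorm
  simp

theorem cnLip_comp_le {n : ℕ} {ψ : V₁ → V₂} {ε : ℝ≥0∞} (h : CnLipNorm n ψ ≤ ε) :
    (‖ψ 0‖₊ : ℝ≥0∞) ≤ ε ∧
    (∀ i ∈ Finset.Icc 1 n, ∀ v : V₁, (‖iteratedFDeriv ℝ i ψ v‖₊ : ℝ≥0∞) ≤ ε) ∧
    (1 ≤ n → ∀ v w : V₁,
      (‖iteratedFDeriv ℝ n ψ v - iteratedFDeriv ℝ n ψ w‖₊ : ℝ≥0∞) ≤ ε * (‖v - w‖₊ : ℝ≥0∞)) := by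
  unfold CnLipNorm at h
  have hL : ∀ i ∈ Finset.Icc 1 n, ∀ v : V₁,
      (‖iteratedFDeriv ℝ i ψ v‖₊ : ℝ≥0∞)
        + (⨆ (v : V₁) (w : V₁) (_ : v ≠ w),
            (‖iteratedFDeriv ℝ n ψ v - iteratedFDeriv ℝ n ψ w‖₊ : ℝ≥0∞) / (‖v - w‖₊ : ℝ≥0∞))
        ≤ ε := by
    intro i hi v
    refine le_trans ?_ (le_trans le_add_self h)
    refine le_trans (le_iSup (fun v : V₁ => (‖iteratedFDeriv ℝ i ψ v‖₊ : ℝ≥0∞)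
        + (⨆ (v : V₁) (w : V₁) (_ : v ≠ w),
            (‖iteratedFDeriv ℝ n ψ v - iteratedFDeriv ℝ n ψ w‖₊ : ℝ≥0∞) / (‖v - w‖₊ : ℝ≥0∞))) v)
      ?_
    exact Finset.single_le_sum (f := fun i => ⨆ v : V₁, ((‖iteratedFDeriv ℝ i ψ v‖₊ : ℝ≥0∞)
        + ⨆ (v : V₁) (w : V₁) (_ : v ≠ w),
            (‖iteratedFDeriv ℝ n ψ v - iteratedFDeriv ℝ n ψ w‖₊ : ℝ≥0∞) / (‖v - w‖₊ : ℝ≥0∞)))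
      (fun _ _ => zero_le) hi
  refine ⟨le_trans le_self_add h, ?_, ?_⟩
  · intro i hi v
    exact le_trans le_self_add (hL i hi v)
  · intro hn v w
    rcases eq_or_ne v w with rfl | hvw
    · simp
    have hsup : (‖iteratedFDeriv ℝ n ψ v - iteratedFDeriv ℝ n ψ w‖₊ : ℝ≥0∞) / (‖v - w‖₊ : ℝ≥0∞)
        ≤ ε := by
      refine le_trans ?_ (le_trans le_add_self
        (hL n (Finset.mem_Icc.mpr ⟨hn, le_rfl⟩) 0))
      refine le_trans (le_iSup (fun _ : v ≠ w =>
          (‖iteratedFDeriv ℝ n ψ v - iteratedFDeriv ℝ n ψ w‖₊ : ℝ≥0∞) / (‖v - w‖₊ : ℝ≥0∞)) hvw) ?_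
      refine le_trans (le_iSup (fun w : V₁ => ⨆ (_ : v ≠ w),
          (‖iteratedFDeriv ℝ n ψ v - iteratedFDeriv ℝ n ψ w‖₊ : ℝ≥0∞) / (‖v - w‖₊ : ℝ≥0∞)) w) ?_
      exact le_iSup (fun v : V₁ => ⨆ (w : V₁) (_ : v ≠ w),
          (‖iteratedFDeriv ℝ n ψ v - iteratedFDeriv ℝ n ψ w‖₊ : ℝ≥0∞) / (‖v - w‖₊ : ℝ≥0∞)) v
    have h0 : (‖v - w‖₊ : ℝ≥0∞) ≠ 0 := by
      simpa [sub_eq_zero] using hvw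
    rw [ENNReal.div_le_iff h0 (by simp)] at hsup
    exact hsup

theorem cnLip_le_of_comp {n : ℕ} {ψ : V₁ → V₂} {a b c : ℝ≥0∞}
    (h0 : (‖ψ 0‖₊ : ℝ≥0∞) ≤ a)
    (h1 : ∀ i ∈ Finset.Icc 1 n, ∀ v : V₁, (‖iteratedFDeriv ℝ i ψ v‖₊ : ℝ≥0∞) ≤ b)
    (h2 : ∀ v w : V₁,
      (‖iteratedFDeriv ℝ n ψ v - iteratedFDeriv ℝ n ψ w‖₊ : ℝ≥0∞) ≤ c * (‖v - w‖₊ : ℝ≥0∞)) :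
    CnLipNorm n ψ ≤ a + n * (b + c) := by
  have hLip : (⨆ (v : V₁) (w : V₁) (_ : v ≠ w),
      (‖iteratedFDeriv ℝ n ψ v - iteratedFDeriv ℝ n ψ w‖₊ : ℝ≥0∞) / (‖v - w‖₊ : ℝ≥0∞)) ≤ c := by
    refine iSup_le fun v => iSup_le fun w => iSup_le fun hvw => ?_
    have h0' : (‖v - w‖₊ : ℝ≥0∞) ≠ 0 := by simpa [sub_eq_zero] using hvw
    rw [ENNReal.div_le_iff h0' (by simp)]
    exact h2 v w
  unfold CnLipNorm
  refine add_le_add h0 ?_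
  calc (∑ i ∈ Finset.Icc 1 n, ⨆ v : V₁, ((‖iteratedFDeriv ℝ i ψ v‖₊ : ℝ≥0∞)
          + ⨆ (v : V₁) (w : V₁) (_ : v ≠ w),
            (‖iteratedFDeriv ℝ n ψ v - iteratedFDeriv ℝ n ψ w‖₊ : ℝ≥0∞) / (‖v - w‖₊ : ℝ≥0∞)))
      ≤ ∑ _i ∈ Finset.Icc 1 n, (b + c) := by
        refine Finset.sum_le_sum fun i hi => ?_
        exact iSup_le fun v => add_le_add (h1 i hi v) hLip
    _ = n * (b + c) := by simp [Finset.sum_const, Nat.card_Icc, mul_comm, add_mul]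

theorem lip_of_deriv_bound {n : ℕ} (hn : 1 ≤ n) {d : V₁ → V₂} (hd : ContDiff ℝ n d) {K : ℝ≥0}
    (h1 : ∀ v : V₁, (‖iteratedFDeriv ℝ 1 d v‖₊ : ℝ≥0∞) ≤ (K : ℝ≥0∞)) :
    ∀ v w : V₁, (‖d v - d w‖₊ : ℝ≥0∞) ≤ (K : ℝ≥0∞) * (‖v - w‖₊ : ℝ≥0∞) := by
  have hdiff : Differentiable ℝ (iteratedFDeriv ℝ 0 d) := by
    refine ((contDiff_iff_continuous_differentiable (n := (n:ℕ∞))).mp ?_).2 0 ?_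
    · exact_mod_cast hd
    · exact_mod_cast hn
  have hb : ∀ v, ‖fderiv ℝ (iteratedFDeriv ℝ 0 d) v‖₊ ≤ K := by
    intro v
    have hnorm : ‖fderiv ℝ (iteratedFDeriv ℝ 0 d) v‖ = ‖iteratedFDeriv ℝ 1 d v‖ :=
      norm_fderiv_iteratedFDeriv
    have h1' : ‖iteratedFDeriv ℝ 1 d v‖₊ ≤ K := by exact_mod_cast h1 v
    have : ‖fderiv ℝ (iteratedFDeriv ℝ 0 d) v‖₊ = ‖iteratedFDeriv ℝ 1 d v‖₊ := by
      ext; exact hnorm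
    rw [this]; exact h1'
  have hlip := lipschitzWith_of_nnnorm_fderiv_le hdiff hb
  intro v w
  have h2 := hlip v w
  rw [edist_eq_enorm_sub, edist_eq_enorm_sub, enorm_eq_nnnorm, enorm_eq_nnnorm] at h2
  have heq : ‖iteratedFDeriv ℝ 0 d v - iteratedFDeriv ℝ 0 d w‖₊ = ‖d v - d w‖₊ := by
    rw [iteratedFDeriv_zero_eq_comp]
    simp only [Function.comp_apply]
    rw [← map_sub, LinearIsometryEquiv.nnnorm_map]
  rwa [heq] at h2

theorem ennnorm_le_add {W : Type*} [NormedAddCommGroup W] (x y : W) :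
    (‖x‖₊ : ℝ≥0∞) ≤ (‖y‖₊ : ℝ≥0∞) + (‖x - y‖₊ : ℝ≥0∞) := by
  have hx : x = y + (x - y) := by abel
  calc (‖x‖₊ : ℝ≥0∞) = ‖y + (x - y)‖₊ := by rw [← hx]
    _ ≤ (‖y‖₊ : ℝ≥0∞) + (‖x - y‖₊ : ℝ≥0∞) := by
        rw [← ENNReal.coe_add]; exact_mod_cast nnnorm_add_le _ _

end Aux

/-- **Completeness of `C^n_Lip`**: every sequence in
`C^n_Lip(V₁,V₂) = {φ ∈ Cⁿ : ‖φ‖_{C^n_Lip} < ∞}` which is Cauchy with respect to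
`‖·‖_{C^n_Lip}` converges in the `‖·‖_{C^n_Lip}`-sense to some element of `C^n_Lip(V₁,V₂)`. -/
theorem CnLipNorm_complete {V₁ V₂ : Type*}
    [NormedAddCommGroup V₁] [NormedSpace ℝ V₁] [CompleteSpace V₁]
    [NormedAddCommGroup V₂] [NormedSpace ℝ V₂] [CompleteSpace V₂]
    (n : ℕ)
    (φ : ℕ → V₁ → V₂)
    (hmem : ∀ m : ℕ, ContDiff ℝ n (φ m) ∧ CnLipNorm n (φ m) < ⊤)
    (hcauchy : Tendsto (fun p : ℕ × ℕ => CnLipNorm n (φ p.1 - φ p.2)) atTop (𝓝 0)) :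
    ∃ ψ : V₁ → V₂, ContDiff ℝ n ψ ∧ CnLipNorm n ψ < ⊤ ∧
      Tendsto (fun m : ℕ => CnLipNorm n (φ m - ψ)) atTop (𝓝 0) := by
  rcases Nat.eq_zero_or_pos n with rfl | hn
  · -- the degenerate case `n = 0` : the norm only sees `φ 0`
    have hc0 : Tendsto (fun p : ℕ × ℕ => (‖φ p.1 0 - φ p.2 0‖₊ : ℝ≥0∞)) atTop (𝓝 0) := by
      have : (fun p : ℕ × ℕ => (‖φ p.1 0 - φ p.2 0‖₊ : ℝ≥0∞))
          = fun p : ℕ × ℕ => CnLipNorm 0 (φ p.1 - φ p.2) := by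
        funext p
        rw [cnLipNorm_zero_eq]
        simp only [Pi.sub_apply]
      rw [this]
      exact hcauchy
    obtain ⟨y, hy⟩ := cauchySeq_tendsto_of_complete (cauchySeq_of_tendsto_ennnorm (f := fun m => φ m 0) hc0)
    refine ⟨fun _ => y, contDiff_const, ?_, ?_⟩
    · rw [cnLipNorm_zero_eq]
      exact ENNReal.coe_lt_top
    · have : (fun m : ℕ => CnLipNorm 0 (φ m - fun _ => y))
          = fun m : ℕ => (‖φ m 0 - y‖₊ : ℝ≥0∞) := by
        funext m
        rw [cnLipNorm_zero_eq]
        simp only [Pi.sub_apply]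
      rw [this]
      exact tendsto_ennnorm_sub_iff.mpr hy
  · -- main case `n ≥ 1`
    have hn' : 1 ≤ n := hn
    -- componentwise Cauchy estimates
    have hck : ∀ ε : ℝ≥0, 0 < ε → ∀ᶠ p : ℕ × ℕ in atTop,
        (∀ v : V₁, (‖φ p.1 v - φ p.2 v‖₊ : ℝ≥0∞) ≤ (ε : ℝ≥0∞) * (1 + ‖v‖₊)) ∧
        (∀ i ∈ Finset.Icc 1 n, ∀ v : V₁,
          (‖iteratedFDeriv ℝ i (φ p.1) v - iteratedFDeriv ℝ i (φ p.2) v‖₊ : ℝ≥0∞) ≤ ε) ∧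
        (∀ v w : V₁,
          (‖(iteratedFDeriv ℝ n (φ p.1) v - iteratedFDeriv ℝ n (φ p.2) v)
            - (iteratedFDeriv ℝ n (φ p.1) w - iteratedFDeriv ℝ n (φ p.2) w)‖₊ : ℝ≥0∞)
            ≤ (ε : ℝ≥0∞) * (‖v - w‖₊ : ℝ≥0∞)) := by
      intro ε hε
      have hev := ENNReal.tendsto_nhds_zero.mp hcauchy (ε : ℝ≥0∞) (by exact_mod_cast hε)
      filter_upwards [hev] with p hp
      have hdC : ContDiff ℝ n (φ p.1 - φ p.2) := (hmem p.1).1.sub (hmem p.2).1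
      obtain ⟨h0, h1, h2⟩ := cnLip_comp_le hp
      have hsub : ∀ i ∈ Finset.Icc 1 n, ∀ v : V₁, iteratedFDeriv ℝ i (φ p.1 - φ p.2) v
          = iteratedFDeriv ℝ i (φ p.1) v - iteratedFDeriv ℝ i (φ p.2) v := by
        intro i hi v
        have hin : (i : WithTop ℕ∞) ≤ n := by exact_mod_cast (Finset.mem_Icc.mp hi).2
        exact myIteratedFDeriv_sub_apply ((hmem p.1).1.of_le hin) ((hmem p.2).1.of_le hin) v
      have h1' : ∀ i ∈ Finset.Icc 1 n, ∀ v : V₁,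
          (‖iteratedFDeriv ℝ i (φ p.1) v - iteratedFDeriv ℝ i (φ p.2) v‖₊ : ℝ≥0∞) ≤ ε := by
        intro i hi v
        rw [← hsub i hi v]
        exact h1 i hi v
      have hmem1 : (1 : ℕ) ∈ Finset.Icc 1 n := Finset.mem_Icc.mpr ⟨le_rfl, hn'⟩
      have hlip : ∀ v w : V₁, (‖(φ p.1 - φ p.2) v - (φ p.1 - φ p.2) w‖₊ : ℝ≥0∞)
          ≤ (ε : ℝ≥0∞) * ‖v - w‖₊ :=
        lip_of_deriv_bound hn' hdC (fun v => h1 1 hmem1 v)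
      refine ⟨?_, h1', ?_⟩
      · intro v
        have e1 : (‖φ p.1 v - φ p.2 v‖₊ : ℝ≥0∞) = (‖(φ p.1 - φ p.2) v‖₊ : ℝ≥0∞) := rfl
        rw [e1]
        calc (‖(φ p.1 - φ p.2) v‖₊ : ℝ≥0∞)
            ≤ (‖(φ p.1 - φ p.2) 0‖₊ : ℝ≥0∞)
              + ‖(φ p.1 - φ p.2) v - (φ p.1 - φ p.2) 0‖₊ := ennnorm_le_add _ _
          _ ≤ (ε : ℝ≥0∞) + (ε : ℝ≥0∞) * ‖v - (0 : V₁)‖₊ := add_le_add h0 (hlip v 0)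
          _ = (ε : ℝ≥0∞) * (1 + ‖v‖₊) := by rw [sub_zero, mul_add, mul_one]
      · intro v w
        rw [← hsub n (Finset.mem_Icc.mpr ⟨hn', le_rfl⟩) v,
          ← hsub n (Finset.mem_Icc.mpr ⟨hn', le_rfl⟩) w]
        exact h2 hn' v w
    -- pointwise limits of the functions
    have hφall : ∀ v : V₁, ∃ y : V₂, Tendsto (fun m => φ m v) atTop (𝓝 y) := by
      intro v
      refine cauchySeq_tendsto_of_complete
        (cauchySeq_of_tendsto_ennnorm (f := fun m => φ m v) ?_)
      rw [ENNReal.tendsto_nhds_zero]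
      intro ε hε
      obtain ⟨δ, hδ0, hδ⟩ := exists_nnreal_pos_mul_le (1 + (‖v‖₊ : ℝ≥0∞))
        (by exact (ENNReal.add_ne_top).mpr ⟨ENNReal.one_ne_top, ENNReal.coe_ne_top⟩) hε
      filter_upwards [hck δ hδ0] with p hp
      exact le_trans (hp.1 v) hδ
    choose Ψ hΨ using hφall
    -- pointwise limits of the higher derivatives
    have hgex : ∀ i, i ∈ Finset.Icc 1 n → ∀ v : V₁,
        ∃ L : ContinuousMultilinearMap ℝ (fun _ : Fin i => V₁) V₂,
          Tendsto (fun m => iteratedFDeriv ℝ i (φ m) v) atTop (𝓝 L) := by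
      intro i hi v
      refine cauchySeq_tendsto_of_complete
        (cauchySeq_of_tendsto_ennnorm (f := fun m => iteratedFDeriv ℝ i (φ m) v) ?_)
      rw [ENNReal.tendsto_nhds_zero]
      intro ε hε
      obtain ⟨δ, hδ0, hδ⟩ := exists_nnreal_pos_mul_le 1 ENNReal.one_ne_top hε
      filter_upwards [hck δ hδ0] with p hp
      exact le_trans (hp.2.1 i hi v) (by simpa using hδ)
    choose g hg using hgex
    -- the candidate Taylor series
    obtain ⟨q, hq0, hqs⟩ : ∃ q : V₁ → FormalMultilinearSeries ℝ V₁ V₂,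
        (∀ v, q v 0 = (continuousMultilinearCurryFin0 ℝ V₁ V₂).symm (Ψ v)) ∧
        (∀ j (h : j + 1 ∈ Finset.Icc 1 n) v, q v (j+1) = g (j+1) h v) := by
      refine ⟨fun v i => match i with
        | 0 => (continuousMultilinearCurryFin0 ℝ V₁ V₂).symm (Ψ v)
        | (j+1) => if h : j + 1 ∈ Finset.Icc 1 n then g (j+1) h v else 0,
        fun v => rfl, fun j h v => dif_pos h⟩
    have hq : ∀ i : ℕ, i ≤ n → ∀ v : V₁,
        Tendsto (fun m => iteratedFDeriv ℝ i (φ m) v) atTop (𝓝 (q v i)) := by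
      intro i hi v
      cases i with
      | zero =>
        rw [hq0]
        have heq : (fun m => iteratedFDeriv ℝ 0 (φ m) v)
            = fun m => (continuousMultilinearCurryFin0 ℝ V₁ V₂).symm (φ m v) := rfl
        rw [heq]
        exact ((continuousMultilinearCurryFin0 ℝ V₁ V₂).symm.continuous.tendsto _).comp (hΨ v)
      | succ j =>
        have hmem' : j + 1 ∈ Finset.Icc 1 n :=
          Finset.mem_Icc.mpr ⟨Nat.succ_le_succ (Nat.zero_le j), hi⟩
        rw [hqs j hmem']
        exact hg (j+1) hmem' v
    -- quantitative closeness to the limit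
    have keyLim : ∀ ε : ℝ≥0, 0 < ε → ∀ᶠ m : ℕ in atTop,
        (∀ v : V₁, (‖φ m v - Ψ v‖₊ : ℝ≥0∞) ≤ (ε : ℝ≥0∞) * (1 + ‖v‖₊)) ∧
        (∀ i ∈ Finset.Icc 1 n, ∀ v : V₁,
          (‖iteratedFDeriv ℝ i (φ m) v - q v i‖₊ : ℝ≥0∞) ≤ ε) ∧
        (∀ v w : V₁,
          (‖(iteratedFDeriv ℝ n (φ m) v - q v n)
            - (iteratedFDeriv ℝ n (φ m) w - q w n)‖₊ : ℝ≥0∞)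
            ≤ (ε : ℝ≥0∞) * (‖v - w‖₊ : ℝ≥0∞)) := by
      intro ε hε
      obtain ⟨P, hP⟩ := eventually_atTop.mp (hck ε hε)
      filter_upwards [eventually_ge_atTop (max P.1 P.2)] with m hm
      have hev : ∀ᶠ l : ℕ in atTop,
          (∀ v : V₁, (‖φ m v - φ l v‖₊ : ℝ≥0∞) ≤ (ε : ℝ≥0∞) * (1 + ‖v‖₊)) ∧
          (∀ i ∈ Finset.Icc 1 n, ∀ v : V₁,
            (‖iteratedFDeriv ℝ i (φ m) v - iteratedFDeriv ℝ i (φ l) v‖₊ : ℝ≥0∞) ≤ ε) ∧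
          (∀ v w : V₁,
            (‖(iteratedFDeriv ℝ n (φ m) v - iteratedFDeriv ℝ n (φ l) v)
              - (iteratedFDeriv ℝ n (φ m) w - iteratedFDeriv ℝ n (φ l) w)‖₊ : ℝ≥0∞)
              ≤ (ε : ℝ≥0∞) * (‖v - w‖₊ : ℝ≥0∞)) := by
        refine eventually_atTop.mpr ⟨max P.1 P.2, fun l hl => ?_⟩
        exact hP (m, l) ⟨(le_max_left P.1 P.2).trans hm, (le_max_right P.1 P.2).trans hl⟩
      refine ⟨?_, ?_, ?_⟩
      · intro v
        have htend : Tendsto (fun l => (‖φ m v - φ l v‖₊ : ℝ≥0∞)) atTop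
            (𝓝 ((‖φ m v - Ψ v‖₊ : ℝ≥0∞))) :=
          ENNReal.tendsto_coe.mpr ((tendsto_const_nhds.sub (hΨ v)).nnnorm)
        refine le_of_tendsto htend ?_
        filter_upwards [hev] with l hl
        exact hl.1 v
      · intro i hi v
        have htend : Tendsto (fun l => (‖iteratedFDeriv ℝ i (φ m) v
              - iteratedFDeriv ℝ i (φ l) v‖₊ : ℝ≥0∞)) atTop
            (𝓝 ((‖iteratedFDeriv ℝ i (φ m) v - q v i‖₊ : ℝ≥0∞))) :=
          ENNReal.tendsto_coe.mpr
            ((tendsto_const_nhds.sub (hq i (Finset.mem_Icc.mp hi).2 v)).nnnorm)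
        refine le_of_tendsto htend ?_
        filter_upwards [hev] with l hl
        exact hl.2.1 i hi v
      · intro v w
        have htend : Tendsto (fun l =>
            (‖(iteratedFDeriv ℝ n (φ m) v - iteratedFDeriv ℝ n (φ l) v)
              - (iteratedFDeriv ℝ n (φ m) w - iteratedFDeriv ℝ n (φ l) w)‖₊ : ℝ≥0∞)) atTop
            (𝓝 ((‖(iteratedFDeriv ℝ n (φ m) v - q v n)
              - (iteratedFDeriv ℝ n (φ m) w - q w n)‖₊ : ℝ≥0∞))) :=
          ENNReal.tendsto_coe.mpr
            (((tendsto_const_nhds.sub (hq n le_rfl v)).sub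
              (tendsto_const_nhds.sub (hq n le_rfl w))).nnnorm)
        refine le_of_tendsto htend ?_
        filter_upwards [hev] with l hl
        exact hl.2.2 v w
    -- uniform convergence of the derivatives of order `1 ≤ i ≤ n`
    have hTU : ∀ i, i ∈ Finset.Icc 1 n →
        TendstoUniformly (fun m v => iteratedFDeriv ℝ i (φ m) v) (fun v => q v i) atTop := by
      intro i hi
      rw [Metric.tendstoUniformly_iff]
      intro ε hε
      have hδ0 : (0 : ℝ≥0) < ⟨ε/2, le_of_lt (half_pos hε)⟩ := by
        exact NNReal.coe_pos.mp (half_pos hε)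
      filter_upwards [keyLim _ hδ0] with m hm v
      have h1 := hm.2.1 i hi v
      rw [dist_eq_norm]
      have h2 : ‖q v i - iteratedFDeriv ℝ i (φ m) v‖₊
          = ‖iteratedFDeriv ℝ i (φ m) v - q v i‖₊ := by ext; exact norm_sub_rev _ _
      have h3 : ‖q v i - iteratedFDeriv ℝ i (φ m) v‖ ≤ ε/2 := by
        have h4 := ENNReal.coe_le_coe.mp h1
        rw [← h2] at h4
        exact_mod_cast h4
      exact lt_of_le_of_lt h3 (half_lt_self hε)
    -- the derivative structure of the limit
    have hfd : ∀ i : ℕ, i < n → ∀ x : V₁,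
        HasFDerivAt (fun y => q y i) (q x (i+1)).curryLeft x := by
      intro i hi x
      have hmem1 : i + 1 ∈ Finset.Icc 1 n :=
        Finset.mem_Icc.mpr ⟨Nat.succ_le_succ (Nat.zero_le i), hi⟩
      have hunif : TendstoUniformly (fun m y => (iteratedFDeriv ℝ (i+1) (φ m) y).curryLeft)
          (fun y => (q y (i+1)).curryLeft) atTop :=
        ((continuousMultilinearCurryLeftEquiv ℝ
          (fun _ : Fin (i+1) => V₁) V₂).isometry.uniformContinuous).comp_tendstoUniformly
          (hTU (i+1) hmem1)
      refine hasFDerivAt_of_tendstoUniformly (f := fun m y => iteratedFDeriv ℝ i (φ m) y) hunif ?_ ?_ x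
      · intro m y
        have hTm := contDiff_iff_ftaylorSeries.mp
          (show ContDiff ℝ (n : ℕ∞) (φ m) from by exact_mod_cast (hmem m).1)
        exact hTm.fderiv i (by exact_mod_cast hi) y
      · intro y
        exact hq i (le_of_lt hi) y
    have hT : HasFTaylorSeriesUpTo (n : ℕ∞) Ψ q := by
      refine ⟨?_, ?_, ?_⟩
      · intro x
        rw [hq0]
        rfl
      · intro i hi x
        exact hfd i (by exact_mod_cast hi) x
      · intro i hi
        cases i with
        | zero =>
          exact continuous_iff_continuousAt.mpr fun x => (hfd 0 hn x).continuousAt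
        | succ j =>
          have hmem' : j + 1 ∈ Finset.Icc 1 n :=
            Finset.mem_Icc.mpr ⟨Nat.succ_le_succ (Nat.zero_le j), by exact_mod_cast hi⟩
          refine (hTU (j+1) hmem').continuous (Eventually.of_forall fun m => ?_).frequently
          exact (hmem m).1.continuous_iteratedFDeriv
            (by exact_mod_cast (Finset.mem_Icc.mp hmem').2)
    have hΨC : ContDiff ℝ (n : ℕ∞) Ψ := hT.contDiff
    have hiter : ∀ i : ℕ, i ≤ n → ∀ v : V₁, q v i = iteratedFDeriv ℝ i Ψ v := by
      intro i hi v
      exact hT.eq_iteratedFDeriv (by exact_mod_cast hi) v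
    refine ⟨Ψ, by exact_mod_cast hΨC, ?_, ?_⟩
    · -- finiteness of the norm of Ψ
      obtain ⟨m, hm⟩ := (keyLim 1 one_pos).exists
      have hCne : CnLipNorm n (φ m) ≠ ⊤ := (hmem m).2.ne
      obtain ⟨c0, c1, c2⟩ := cnLip_comp_le (le_refl (CnLipNorm n (φ m)))
      have hb0 : (‖Ψ 0‖₊ : ℝ≥0∞) ≤ CnLipNorm n (φ m) + 1 := by
        refine le_trans (ennnorm_le_add (Ψ 0) (φ m 0)) (add_le_add c0 ?_)
        have h1 := hm.1 0
        simp only [nnnorm_zero, ENNReal.coe_zero, add_zero, one_mul, ENNReal.coe_one] at h1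
        calc (‖Ψ 0 - φ m 0‖₊ : ℝ≥0∞) = ‖φ m 0 - Ψ 0‖₊ := by
              congr 1; ext; exact norm_sub_rev _ _
          _ ≤ 1 := h1
      have hb1 : ∀ i ∈ Finset.Icc 1 n, ∀ v : V₁,
          (‖iteratedFDeriv ℝ i Ψ v‖₊ : ℝ≥0∞) ≤ CnLipNorm n (φ m) + 1 := by
        intro i hi v
        rw [← hiter i (Finset.mem_Icc.mp hi).2 v]
        refine le_trans (ennnorm_le_add (q v i) (iteratedFDeriv ℝ i (φ m) v))
          (add_le_add (c1 i hi v) ?_)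
        calc (‖q v i - iteratedFDeriv ℝ i (φ m) v‖₊ : ℝ≥0∞)
            = ‖iteratedFDeriv ℝ i (φ m) v - q v i‖₊ := by
              congr 1; ext; exact norm_sub_rev _ _
          _ ≤ 1 := by exact_mod_cast hm.2.1 i hi v
      have hb2 : ∀ v w : V₁, (‖iteratedFDeriv ℝ n Ψ v - iteratedFDeriv ℝ n Ψ w‖₊ : ℝ≥0∞)
          ≤ (CnLipNorm n (φ m) + 1) * (‖v - w‖₊ : ℝ≥0∞) := by
        intro v w
        rw [← hiter n le_rfl v, ← hiter n le_rfl w]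
        have hid : q v n - q w n
            = (iteratedFDeriv ℝ n (φ m) v - iteratedFDeriv ℝ n (φ m) w)
              - ((iteratedFDeriv ℝ n (φ m) v - q v n)
                - (iteratedFDeriv ℝ n (φ m) w - q w n)) := by abel
        rw [hid]
        refine le_trans (ennnorm_sub_le' _ _) ?_
        rw [add_mul]
        refine add_le_add (c2 hn' v w) ?_
        have h3 := hm.2.2 v w
        simpa using h3
      refine lt_of_le_of_lt (cnLip_le_of_comp hb0 hb1 hb2) ?_
      rw [lt_top_iff_ne_top]
      refine ENNReal.add_ne_top.mpr ⟨ENNReal.add_ne_top.mpr ⟨hCne, ENNReal.one_ne_top⟩, ?_⟩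
      refine ENNReal.mul_ne_top (ENNReal.natCast_ne_top n) ?_
      refine ENNReal.add_ne_top.mpr ⟨?_, ?_⟩ <;>
        exact ENNReal.add_ne_top.mpr ⟨hCne, ENNReal.one_ne_top⟩
    · -- convergence in the CnLip norm
      rw [ENNReal.tendsto_nhds_zero]
      intro ε hε
      obtain ⟨δ, hδ0, hδ⟩ := exists_nnreal_pos_mul_le (1 + 2 * n)
        (by
          refine ENNReal.add_ne_top.mpr ⟨ENNReal.one_ne_top, ?_⟩
          exact ENNReal.mul_ne_top (by simp) (ENNReal.natCast_ne_top n)) hε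
      filter_upwards [keyLim δ hδ0] with m hm
      have hΨC' : ContDiff ℝ n Ψ := by exact_mod_cast hΨC
      have hsub' : ∀ i ∈ Finset.Icc 1 n, ∀ v : V₁, iteratedFDeriv ℝ i (φ m - Ψ) v
          = iteratedFDeriv ℝ i (φ m) v - q v i := by
        intro i hi v
        have hin : (i : WithTop ℕ∞) ≤ n := by exact_mod_cast (Finset.mem_Icc.mp hi).2
        rw [myIteratedFDeriv_sub_apply ((hmem m).1.of_le hin) (hΨC'.of_le hin) v,
          hiter i (Finset.mem_Icc.mp hi).2 v]
      have hb0 : (‖(φ m - Ψ) 0‖₊ : ℝ≥0∞) ≤ (δ : ℝ≥0∞) := by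
        have h1 := hm.1 0
        simp only [nnnorm_zero, ENNReal.coe_zero, add_zero, mul_one] at h1
        exact h1
      have hb1 : ∀ i ∈ Finset.Icc 1 n, ∀ v : V₁,
          (‖iteratedFDeriv ℝ i (φ m - Ψ) v‖₊ : ℝ≥0∞) ≤ (δ : ℝ≥0∞) := by
        intro i hi v
        rw [hsub' i hi v]
        exact hm.2.1 i hi v
      have hb2 : ∀ v w : V₁,
          (‖iteratedFDeriv ℝ n (φ m - Ψ) v - iteratedFDeriv ℝ n (φ m - Ψ) w‖₊ : ℝ≥0∞)
            ≤ (δ : ℝ≥0∞) * (‖v - w‖₊ : ℝ≥0∞) := by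
        intro v w
        rw [hsub' n (Finset.mem_Icc.mpr ⟨hn', le_rfl⟩) v,
          hsub' n (Finset.mem_Icc.mpr ⟨hn', le_rfl⟩) w]
        exact hm.2.2 v w
      refine le_trans (cnLip_le_of_comp hb0 hb1 hb2) ?_
      calc (δ : ℝ≥0∞) + n * ((δ : ℝ≥0∞) + δ) = (δ : ℝ≥0∞) * (1 + 2 * n) := by ring
        _ ≤ ε := hδ
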